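/- Applying T − 1 steps of Q-value iteration to the Q-function of any policy in a deterministic finite-horizon MDP yields the optimal Q-function; hence every deterministic MDP is T-QVI-solvable. -/

import Mathlib

open Finset Classical

/-- Total reward of playing a list of actions from state `s` in a deterministic MDP. -/
def seqReturn {S : Type*} (A : ℕ) (f : S → Fin A → S) (R : S → Fin A → ℝ) :
    S → List (Fin A) → ℝ
  | _, [] => 0
  | s, a :: rest => R s a + seqReturn A f R (f s a) rest

/-- Value function of a (time-indexed, stochastic) policy by fuel recursion. -/
noncomputable def polV {S : Type*} (A : ℕ) (f : S → Fin A → S) (R : S → Fin A → ℝ)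
    (pi : ℕ → S → Fin A → ℝ) : ℕ → ℕ → S → ℝ
  | _, 0, _ => 0
  | t, n + 1, s => ∑ a : Fin A, pi t s a * (R s a + polV A f R pi (t + 1) n (f s a))

/-- `Q^π_t(s,a)` in a horizon-`T` deterministic MDP. -/
noncomputable def polQ {S : Type*} (A T : ℕ) (f : S → Fin A → S) (R : S → Fin A → ℝ)
    (pi : ℕ → S → Fin A → ℝ) (t : ℕ) (s : S) (a : Fin A) : ℝ :=
  R s a + polV A f R pi (t + 1) (T - t) (f s a)

/-- Optimal value function by fuel recursion. -/
noncomputable def optV {S : Type*} (A : ℕ) (f : S → Fin A → S) (R : S → Fin A → ℝ) :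
    ℕ → S → ℝ
  | 0, _ => 0
  | n + 1, s => ⨆ a : Fin A, (R s a + optV A f R n (f s a))

/-- Optimal Q-function at timestep `t` (horizon `T`). -/
noncomputable def optQ {S : Type*} (A T : ℕ) (f : S → Fin A → S) (R : S → Fin A → ℝ)
    (t : ℕ) (s : S) (a : Fin A) : ℝ :=
  R s a + optV A f R (T - t) (f s a)

/-- Q-value-iteration iterates: `qIter ... Q1 0 = Q1`, `qIter ... Q1 (j+1) = QVI (qIter ... Q1 j)`. -/
noncomputable def qIter {S : Type*} (A T : ℕ) (f : S → Fin A → S) (R : S → Fin A → ℝ)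
    (Q1 : ℕ → S → Fin A → ℝ) : ℕ → ℕ → S → Fin A → ℝ
  | 0 => Q1
  | j + 1 => fun t s a =>
      R s a + if t < T then ⨆ a' : Fin A, qIter A T f R Q1 j (t + 1) (f s a) a' else 0

/-- Trajectory of a deterministic policy: `polState ... t` is the state at timestep `t+1`. -/
def polState {S : Type*} (A : ℕ) (f : S → Fin A → S) (p : ℕ → S → Fin A) (s1 : S) : ℕ → S
  | 0 => s1
  | t + 1 => f (polState A f p s1 t) (p (t + 1) (polState A f p s1 t))

/--
Applying `T − 1` steps of Q-value iteration to the Q-function of any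
policy `pi` in a deterministic finite-horizon MDP yields the optimal Q-function.
More precisely, writing `Q^{(i)}` for `i` applications of QVI to `Q^pi`, one has
`Q^{(i)}_t = Q*_t` for all timesteps `t ∈ [1,T]` with `T − i ≤ t`; in particular
`Q^{(T−1)}_t = Q*_t` for every `t ∈ [1,T]`, so every policy greedy with respect to
`Q^{(T−1)}` is optimal: every deterministic MDP is `T`-QVI-solvable.
-/
theorem qvi_T_steps_optimal
    {S : Type*} (A T : ℕ) (hApos : 0 < A)
    (f : S → Fin A → S) (R : S → Fin A → ℝ)
    (pi : ℕ → S → Fin A → ℝ)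
    (hprob : ∀ t s, ∑ a : Fin A, pi t s a = 1)
    (hnn : ∀ t s a, 0 ≤ pi t s a) :
    -- (a) after i steps of QVI the Q-function is optimal on timesteps t ≥ T − i
    (∀ i t s a, 1 ≤ t → t ≤ T → T - i ≤ t →
        qIter A T f R (polQ A T f R pi) i t s a = optQ A T f R t s a) ∧
    -- (b) hence any policy greedy w.r.t. the (T−1)-fold iterate is optimal
    (∀ (s1 : S) (p : ℕ → S → Fin A),
      (∀ t s a, 1 ≤ t → t ≤ T →
          qIter A T f R (polQ A T f R pi) (T - 1) t s a
            ≤ qIter A T f R (polQ A T f R pi) (T - 1) t s (p t s)) →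
      seqReturn A f R s1
          (List.ofFn (fun i : Fin T => p (i + 1) (polState A f p s1 i)))
        = optV A f R T s1) := by
  have hne : Nonempty (Fin A) := ⟨⟨0, hApos⟩⟩
  -- Part (a)
  have parta : ∀ i t s a, 1 ≤ t → t ≤ T → T - i ≤ t →
      qIter A T f R (polQ A T f R pi) i t s a = optQ A T f R t s a := by
    intro i
    induction i with
    | zero =>
      intro t s a h1 h2 h3
      have ht : t = T := le_antisymm h2 (by simpa using h3)
      subst ht
      simp [qIter, polQ, optQ, Nat.sub_self, polV, optV]
    | succ i ih =>
      intro t s a h1 h2 h3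
      rcases eq_or_lt_of_le h2 with heq | hlt
      · subst heq
        simp [qIter, optQ, Nat.sub_self, optV]
      · have hlt' : t < T := hlt
        have h1' : 1 ≤ t + 1 := by omega
        have h2' : t + 1 ≤ T := hlt'
        have h3' : T - i ≤ t + 1 := by omega
        have hrec : ∀ a' : Fin A,
            qIter A T f R (polQ A T f R pi) i (t + 1) (f s a) a'
              = optQ A T f R (t + 1) (f s a) a' := fun a' => ih (t+1) (f s a) a' h1' h2' h3'
        have hsub : T - t = (T - (t + 1)) + 1 := by omega
        simp only [qIter, if_pos hlt', hrec, optQ, hsub, optV]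
  refine ⟨parta, ?_⟩
  intro s1 p hg
  -- greedy step lemma
  have hstep : ∀ t s, 1 ≤ t → t ≤ T →
      R s (p t s) + optV A f R (T - t) (f s (p t s)) = optV A f R (T - t + 1) s := by
    intro t s h1 h2
    have hT1 : 1 ≤ T := le_trans h1 h2
    have hopt : ∀ a, R s a + optV A f R (T - t) (f s a)
        ≤ R s (p t s) + optV A f R (T - t) (f s (p t s)) := by
      intro a
      have e1 := parta (T - 1) t s a h1 h2 (by omega)
      have e2 := parta (T - 1) t s (p t s) h1 h2 (by omega)
      have := hg t s a h1 h2
      rw [e1, e2] at this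
      simpa [optQ] using this
    have hb : BddAbove (Set.range fun a : Fin A => R s a + optV A f R (T - t) (f s a)) :=
      Set.Finite.bddAbove (Set.finite_range _)
    have : (⨆ a : Fin A, (R s a + optV A f R (T - t) (f s a)))
        = R s (p t s) + optV A f R (T - t) (f s (p t s)) :=
      le_antisymm (ciSup_le hopt) (le_ciSup hb (p t s))
    rw [show optV A f R (T - t + 1) s = ⨆ a : Fin A, (R s a + optV A f R (T - t) (f s a)) from rfl]
    exact this.symm
  -- key induction
  have key : ∀ m j, j + m = T →
      seqReturn A f R (polState A f p s1 j)
        (List.ofFn fun i : Fin m => p (j + i + 1) (polState A f p s1 (j + i)))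
        = optV A f R m (polState A f p s1 j) := by
    intro m
    induction m with
    | zero => intro j hj; simp [seqReturn, optV]
    | succ m ih =>
      intro j hj
      rw [List.ofFn_succ]
      simp only [Fin.val_zero, Nat.add_zero, Fin.val_succ]
      rw [show seqReturn A f R (polState A f p s1 j)
            ((p (j + 1) (polState A f p s1 j)) ::
              List.ofFn fun i : Fin m => p (j + (i + 1) + 1) (polState A f p s1 (j + (i + 1))))
          = R (polState A f p s1 j) (p (j + 1) (polState A f p s1 j))
            + seqReturn A f R (f (polState A f p s1 j) (p (j + 1) (polState A f p s1 j)))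
              (List.ofFn fun i : Fin m => p (j + (i + 1) + 1) (polState A f p s1 (j + (i + 1))))
          from rfl]
      have hst : f (polState A f p s1 j) (p (j + 1) (polState A f p s1 j))
          = polState A f p s1 (j + 1) := rfl
      have harith : ∀ i : Fin m, j + (↑i + 1) = (j + 1) + ↑i := by intro i; omega
      have hlist : (List.ofFn fun i : Fin m =>
            p (j + (↑i + 1) + 1) (polState A f p s1 (j + (↑i + 1))))
          = List.ofFn fun i : Fin m =>
            p ((j + 1) + ↑i + 1) (polState A f p s1 ((j + 1) + ↑i)) := by
        congr 1
        funext i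
        rw [harith i]
      rw [hst, hlist, ih (j + 1) (by omega)]
      have hTt : T - (j + 1) = m := by omega
      have := hstep (j + 1) (polState A f p s1 j) (by omega) (by omega)
      rw [hTt] at this
      exact this
  have := key T 0 (by omega)
  simpa [show polState A f p s1 0 = s1 from rfl] using this
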